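/- Let D be a unital C*-algebra, let s be an isometry in D with V(a) = s*as, and let v₁, v₂ be isometries satisfying v₁v₁* + v₂v₂* = 1. Put w₁ = (1 − ss*) + sv₁s* and w₂ = sv₂. Then for all a in D: ‖w₁ a w₁* + w₂ V(a) w₂* − a‖ ≤ ‖[v₁, V(a)]‖ + ‖[v₂, V(a)]‖ + 2‖[a, ss*]‖. -/

import Mathlib

section Aux

variable {D : Type*} [NormedRing D] [StarRing D] [CStarRing D]

lemma my_norm_isometry_mul (s x : D) (hs : star s * s = 1) : ‖s * x‖ = ‖x‖ := by
  have h : ‖s * x‖ * ‖s * x‖ = ‖x‖ * ‖x‖ := by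
    rw [← CStarRing.norm_star_mul_self, ← CStarRing.norm_star_mul_self (x := x)]
    congr 1
    rw [star_mul, mul_assoc, ← mul_assoc (star s), hs, one_mul]
  nlinarith [norm_nonneg (s * x), norm_nonneg x]

lemma my_norm_mul_star_isometry (s x : D) (hs : star s * s = 1) : ‖x * star s‖ = ‖x‖ := by
  rw [← norm_star (x * star s), star_mul, star_star, my_norm_isometry_mul s (star x) hs,
    norm_star]

lemma my_sa_ortho_norm (A B : D) (hA : IsSelfAdjoint A) (hB : IsSelfAdjoint B)
    (hAB : A * B = 0) (hBA : B * A = 0) {M : ℝ} (hMA : ‖A‖ ≤ M) (hMB : ‖B‖ ≤ M) :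
    ‖A + B‖ ≤ M := by
  have hM0 : 0 ≤ M := le_trans (norm_nonneg A) hMA
  have hpowmul : ∀ k : ℕ, A ^ (k + 1) * B ^ (k + 1) = 0 := by
    intro k
    rw [pow_succ, pow_succ', mul_assoc, ← mul_assoc A, hAB, zero_mul, mul_zero]
  have hpowmul' : ∀ k : ℕ, B ^ (k + 1) * A ^ (k + 1) = 0 := by
    intro k
    rw [pow_succ, pow_succ', mul_assoc, ← mul_assoc B, hBA, zero_mul, mul_zero]
  have hpow : ∀ n : ℕ, (A + B) ^ (2 ^ n) = A ^ (2 ^ n) + B ^ (2 ^ n) := by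
    intro n
    induction n with
    | zero => simp
    | succ n ih =>
      have h2 : (2 : ℕ) ^ (n + 1) = 2 ^ n * 2 := by ring
      obtain ⟨k, hk⟩ : ∃ k, 2 ^ n = k + 1 :=
        ⟨2 ^ n - 1, (Nat.succ_pred_eq_of_pos (Nat.pow_pos (by norm_num : 0 < 2) : 0 < 2 ^ n)).symm⟩
      rw [h2, pow_mul, pow_mul, pow_mul, ih]
      rw [sq, sq, sq, add_mul, mul_add, mul_add, hk, hpowmul k, hpowmul' k]
      abel
  have hsa : IsSelfAdjoint (A + B) := hA.add hB
  have hnorm : ∀ n : ℕ, ‖A + B‖ ^ (2 ^ n) ≤ 2 * M ^ (2 ^ n) := by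
    intro n
    have h1 : ‖(A + B) ^ (2 ^ n)‖ = ‖A + B‖ ^ (2 ^ n) := by
      have := hsa.nnnorm_pow_two_pow n
      calc ‖(A + B) ^ (2 ^ n)‖ = ((‖(A + B) ^ (2 ^ n)‖₊ : ℝ)) := rfl
        _ = ((‖A + B‖₊ ^ (2^n) : NNReal) : ℝ) := by rw [this]
        _ = ‖A + B‖ ^ (2 ^ n) := by push_cast; rfl
    calc ‖A + B‖ ^ (2 ^ n) = ‖(A + B) ^ (2 ^ n)‖ := h1.symm
      _ = ‖A ^ (2 ^ n) + B ^ (2 ^ n)‖ := by rw [hpow n]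
      _ ≤ ‖A ^ (2 ^ n)‖ + ‖B ^ (2 ^ n)‖ := norm_add_le _ _
      _ ≤ ‖A‖ ^ (2 ^ n) + ‖B‖ ^ (2 ^ n) := by
          gcongr <;> exact norm_pow_le' _ (Nat.pow_pos (by norm_num : 0 < 2) : 0 < 2 ^ n)
      _ ≤ M ^ (2 ^ n) + M ^ (2 ^ n) := by
          gcongr
      _ = 2 * M ^ (2 ^ n) := by ring
  by_contra hcon
  push_neg at hcon
  have htpos : 0 < ‖A + B‖ := lt_of_le_of_lt hM0 hcon
  rcases eq_or_lt_of_le hM0 with hM | hM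
  · have := hnorm 1
    rw [← hM] at this
    norm_num at this
    simp [this] at htpos
  · set r : ℝ := ‖A + B‖ / M with hr
    have hr1 : 1 < r := (one_lt_div hM).mpr hcon
    obtain ⟨n, hn⟩ := pow_unbounded_of_one_lt (2 : ℝ) hr1
    have h1 : r ^ n ≤ r ^ (2 ^ n) := pow_le_pow_right₀ hr1.le (Nat.lt_two_pow_self (n := n)).le
    have h2 : r ^ (2 ^ n) ≤ 2 := by
      rw [hr, div_pow, div_le_iff₀ (by positivity)]
      simpa using hnorm n
    linarith

lemma my_ortho_norm (P Q : D) (h1 : star P * Q = 0) (h2 : P * star Q = 0)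
    {M : ℝ} (hP : ‖P‖ ≤ M) (hQ : ‖Q‖ ≤ M) : ‖P + Q‖ ≤ M := by
  have hM0 : 0 ≤ M := le_trans (norm_nonneg P) hP
  have h1' : star Q * P = 0 := by
    have := congrArg star h1
    rwa [star_mul, star_star, star_zero] at this
  have h2' : Q * star P = 0 := by
    have := congrArg star h2
    rwa [star_mul, star_star, star_zero] at this
  have hexp : star (P + Q) * (P + Q) = star P * P + star Q * Q := by
    rw [star_add, add_mul, mul_add, mul_add, h1, h1']
    abel
  have hkey : ‖star (P + Q) * (P + Q)‖ ≤ M * M := by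
    rw [hexp]
    apply my_sa_ortho_norm (hA := IsSelfAdjoint.star_mul_self P)
      (hB := IsSelfAdjoint.star_mul_self Q)
    · rw [mul_assoc, ← mul_assoc P, h2, zero_mul, mul_zero]
    · rw [mul_assoc, ← mul_assoc Q, h2', zero_mul, mul_zero]
    · rw [CStarRing.norm_star_mul_self]
      exact mul_le_mul hP hP (norm_nonneg _) hM0
    · rw [CStarRing.norm_star_mul_self]
      exact mul_le_mul hQ hQ (norm_nonneg _) hM0
  rw [CStarRing.norm_star_mul_self] at hkey
  nlinarith [norm_nonneg (P + Q)]

end Aux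

/-- With `V a = s* a s`, `w₁ = (1 − ss*) + s v₁ s*`, `w₂ = s v₂`,
one has `‖w₁ a w₁* + w₂ V(a) w₂* − a‖ ≤ ‖[v₁, V(a)]‖ + ‖[v₂, V(a)]‖ + 2‖[a, ss*]‖`. -/
theorem stmt2 {D : Type*} [CStarAlgebra D] (s v₁ v₂ : D)
    (hs : star s * s = 1) (hv₁ : star v₁ * v₁ = 1) (hv₂ : star v₂ * v₂ = 1)
    (hO₂ : v₁ * star v₁ + v₂ * star v₂ = 1) (a : D) :
    ‖((1 - s * star s) + s * v₁ * star s) * a * star ((1 - s * star s) + s * v₁ * star s) +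
        (s * v₂) * (star s * a * s) * star (s * v₂) - a‖ ≤
      ‖v₁ * (star s * a * s) - (star s * a * s) * v₁‖ +
      ‖v₂ * (star s * a * s) - (star s * a * s) * v₂‖ +
      2 * ‖a * (s * star s) - (s * star s) * a‖ := by
  have l1 : ∀ x : D, star s * (s * x) = x := fun x => by rw [← mul_assoc, hs, one_mul]
  have l2 : ∀ x : D, star v₁ * (v₁ * x) = x := fun x => by rw [← mul_assoc, hv₁, one_mul]
  have l3 : ∀ x : D, star v₂ * (v₂ * x) = x := fun x => by rw [← mul_assoc, hv₂, one_mul]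
  have l4 : ∀ x : D, v₂ * (star v₂ * x) = x - v₁ * (star v₁ * x) := by
    intro x
    have h : v₁ * (star v₁ * x) + v₂ * (star v₂ * x) = x := by
      have := congrArg (fun y => y * x) hO₂
      simpa [add_mul, mul_assoc] using this
    exact eq_sub_of_add_eq' h
  set p : D := s * star s with hpdef
  set u : D := s * v₁ * star s with hudef
  set c : D := a * p - p * a with hcdef
  set P : D := (u - 1) * (p * a * (1 - p)) with hPdef
  set Q : D := ((1 - p) * a * p) * (star u - 1) with hQdef
  set E₁ : D := s * ((v₁ * (star s * a * s) - (star s * a * s) * v₁) * star v₁ * star s)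
    with hE₁def
  set E₂ : D := s * ((v₂ * (star s * a * s) - (star s * a * s) * v₂) * star v₂ * star s)
    with hE₂def
  -- the key algebraic identity
  have key : ((1 - p) + u) * a * star ((1 - p) + u) +
      (s * v₂) * (star s * a * s) * star (s * v₂) - a = (P + Q) + (E₁ + E₂) := by
    rw [hPdef, hQdef, hE₁def, hE₂def, hudef, hpdef]
    simp only [star_add, star_sub, star_mul, star_one, star_star]
    simp only [sub_mul, mul_sub, add_mul, mul_add, mul_one, one_mul, mul_assoc, l1, l2, l3, l4]
    abel
  -- orthogonality of P and Q
  have horth1 : star P * Q = 0 := by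
    rw [hPdef, hQdef, hudef, hpdef]
    simp only [star_sub, star_mul, star_one, star_star]
    simp only [sub_mul, mul_sub, add_mul, mul_add, mul_one, one_mul, mul_assoc, l1, l2, l3]
    abel
  have horth2 : P * star Q = 0 := by
    rw [hPdef, hQdef, hudef, hpdef]
    simp only [star_sub, star_mul, star_one, star_star]
    simp only [sub_mul, mul_sub, add_mul, mul_add, mul_one, one_mul, mul_assoc, l1, l2, l3]
    abel
  -- basic norm facts
  have hone : ‖(1 : D)‖ ≤ 1 := by
    have h : ‖(1 : D)‖ * ‖(1 : D)‖ = ‖(1 : D)‖ := by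
      rw [← CStarRing.norm_star_mul_self (x := (1 : D)), star_one, one_mul]
    nlinarith [norm_nonneg (1 : D)]
  have hv₁n : ‖v₁‖ ≤ 1 := by
    have h : ‖v₁‖ * ‖v₁‖ ≤ 1 := by
      rw [← CStarRing.norm_star_mul_self, hv₁]; exact hone
    nlinarith [norm_nonneg v₁]
  have hun : ‖u‖ ≤ 1 := by
    rw [hudef, mul_assoc, my_norm_isometry_mul s _ hs, my_norm_mul_star_isometry s _ hs]
    exact hv₁n
  have h1mp : ‖(1 : D) - p‖ ≤ 1 := by
    have hq : ((1 : D) - p) * ((1 : D) - p) = (1 : D) - p := by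
      rw [hpdef]
      simp only [sub_mul, mul_sub, mul_one, one_mul, mul_assoc, l1]
      abel
    have hqsa : star ((1 : D) - p) = (1 : D) - p := by
      rw [hpdef, star_sub, star_one, star_mul, star_star]
    have h : ‖(1 : D) - p‖ * ‖(1 : D) - p‖ = ‖(1 : D) - p‖ := by
      rw [← CStarRing.norm_star_mul_self (x := (1 : D) - p), hqsa, hq]
    nlinarith [norm_nonneg ((1 : D) - p)]
  -- ‖P‖ ≤ 2‖c‖
  have hPc : p * a * (1 - p) = -(c * (1 - p)) := by
    rw [hcdef, hpdef]
    simp only [sub_mul, mul_sub, mul_one, one_mul, mul_assoc, l1, neg_sub]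
    abel
  have hPn : ‖P‖ ≤ 2 * ‖c‖ := by
    rw [hPdef, hPc, mul_neg, norm_neg]
    calc ‖(u - 1) * (c * (1 - p))‖ ≤ ‖u - 1‖ * ‖c * (1 - p)‖ := norm_mul_le _ _
      _ ≤ 2 * ‖c‖ := by
          have h1 : ‖u - 1‖ ≤ 2 := by
            calc ‖u - 1‖ ≤ ‖u‖ + ‖(1 : D)‖ := norm_sub_le _ _
              _ ≤ 2 := by linarith
          have h2 : ‖c * (1 - p)‖ ≤ ‖c‖ := by
            calc ‖c * (1 - p)‖ ≤ ‖c‖ * ‖(1 : D) - p‖ := norm_mul_le _ _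
              _ ≤ ‖c‖ * 1 := by gcongr
              _ = ‖c‖ := mul_one _
          calc ‖u - 1‖ * ‖c * (1 - p)‖ ≤ 2 * ‖c * (1 - p)‖ := by
                gcongr
              _ ≤ 2 * ‖c‖ := by gcongr
  -- ‖Q‖ ≤ 2‖c‖
  have hQc : (1 - p) * a * p = (1 - p) * c := by
    rw [hcdef, hpdef]
    simp only [sub_mul, mul_sub, mul_one, one_mul, mul_assoc, l1]
    abel
  have hQn : ‖Q‖ ≤ 2 * ‖c‖ := by
    rw [hQdef, hQc]
    calc ‖(1 - p) * c * (star u - 1)‖ ≤ ‖(1 - p) * c‖ * ‖star u - 1‖ := norm_mul_le _ _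
      _ ≤ 2 * ‖c‖ := by
          have h1 : ‖star u - 1‖ ≤ 2 := by
            calc ‖star u - 1‖ ≤ ‖star u‖ + ‖(1 : D)‖ := norm_sub_le _ _
              _ ≤ 2 := by rw [norm_star]; linarith
          have h2 : ‖(1 - p) * c‖ ≤ ‖c‖ := by
            calc ‖(1 - p) * c‖ ≤ ‖(1 : D) - p‖ * ‖c‖ := norm_mul_le _ _
              _ ≤ 1 * ‖c‖ := by gcongr
              _ = ‖c‖ := one_mul _
          calc ‖(1 - p) * c‖ * ‖star u - 1‖ ≤ ‖c‖ * 2 := by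
                gcongr
              _ = 2 * ‖c‖ := by ring
  have hPQ : ‖P + Q‖ ≤ 2 * ‖c‖ := my_ortho_norm P Q horth1 horth2 hPn hQn
  -- E norms
  have hE₁n : ‖E₁‖ ≤ ‖v₁ * (star s * a * s) - (star s * a * s) * v₁‖ := by
    rw [hE₁def, my_norm_isometry_mul s _ hs, my_norm_mul_star_isometry s _ hs,
      my_norm_mul_star_isometry v₁ _ hv₁]
  have hE₂n : ‖E₂‖ ≤ ‖v₂ * (star s * a * s) - (star s * a * s) * v₂‖ := by
    rw [hE₂def, my_norm_isometry_mul s _ hs, my_norm_mul_star_isometry s _ hs,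
      my_norm_mul_star_isometry v₂ _ hv₂]
  -- assemble
  have hgoal_eq : ((1 - s * star s) + s * v₁ * star s) * a *
      star ((1 - s * star s) + s * v₁ * star s) +
      (s * v₂) * (star s * a * s) * star (s * v₂) - a = (P + Q) + (E₁ + E₂) := key
  rw [hgoal_eq]
  have hcnorm : ‖a * (s * star s) - (s * star s) * a‖ = ‖c‖ := by rw [hcdef, hpdef]
  rw [hcnorm]
  calc ‖(P + Q) + (E₁ + E₂)‖ ≤ ‖P + Q‖ + (‖E₁‖ + ‖E₂‖) :=
        le_trans (norm_add_le _ _) (by gcongr; exact norm_add_le _ _)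
    _ ≤ 2 * ‖c‖ + (‖v₁ * (star s * a * s) - (star s * a * s) * v₁‖ +
        ‖v₂ * (star s * a * s) - (star s * a * s) * v₂‖) := by gcongr
    _ = ‖v₁ * (star s * a * s) - (star s * a * s) * v₁‖ +
        ‖v₂ * (star s * a * s) - (star s * a * s) * v₂‖ + 2 * ‖c‖ := by ring
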